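/- Let k ≥ 1 and n ≥ 1. Then R_k(n) = (Σ_{i=1}^{n−1} k^{2n−2i}·u_i) − M_k(n). -/

import Mathlib

open Classical Finset Filter

/-- A border of `w`: a non-empty word that is both a proper prefix and a suffix of `w`. -/
def IsBorder {k : ℕ} (w b : List (Fin k)) : Prop :=
  b ≠ [] ∧ b ≠ w ∧ b <+: w ∧ b <:+ w

/-- A word is unbordered if it has no border. -/
def Unbordered {k : ℕ} (w : List (Fin k)) : Prop :=
  ∀ b, ¬ IsBorder w b

/-- A right-border of `(u,v)`: a non-empty proper suffix of `u` that is a proper prefix of `v`. -/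
def IsRightBorder {k : ℕ} (u v b : List (Fin k)) : Prop :=
  b ≠ [] ∧ b <:+ u ∧ b ≠ u ∧ b <+: v ∧ b ≠ v

/-- A left-border of `(u,v)`: a non-empty proper prefix of `u` that is a proper suffix of `v`. -/
def IsLeftBorder {k : ℕ} (u v b : List (Fin k)) : Prop :=
  b ≠ [] ∧ b <+: u ∧ b ≠ u ∧ b <:+ v ∧ b ≠ v

def MutuallyBordered {k : ℕ} (u v : List (Fin k)) : Prop :=
  (∃ b, IsRightBorder u v b) ∧ (∃ b, IsLeftBorder u v b)

def MutuallyUnbordered {k : ℕ} (u v : List (Fin k)) : Prop :=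
  (¬ ∃ b, IsRightBorder u v b) ∧ (¬ ∃ b, IsLeftBorder u v b)

def RightBordered {k : ℕ} (u v : List (Fin k)) : Prop :=
  (∃ b, IsRightBorder u v b) ∧ (¬ ∃ b, IsLeftBorder u v b)

/-- `lso u v`: the length of the shortest right-border of `(u,v)`, or `0` if there is none. -/
noncomputable def lso {k : ℕ} (u v : List (Fin k)) : ℕ :=
  sInf {m | ∃ b : List (Fin k), IsRightBorder u v b ∧ b.length = m}

def IsShortestRightBorder {k : ℕ} (u v b : List (Fin k)) : Prop :=
  IsRightBorder u v b ∧ ∀ b', IsRightBorder u v b' → b.length ≤ b'.length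

def IsShortestLeftBorder {k : ℕ} (u v b : List (Fin k)) : Prop :=
  IsLeftBorder u v b ∧ ∀ b', IsLeftBorder u v b' → b.length ≤ b'.length

/-- The finite set of all length-`n` words over `Σ_k`. -/
def Words (k n : ℕ) : Finset (List (Fin k)) :=
  (Finset.univ : Finset (Fin n → Fin k)).image List.ofFn

/-- `UB k n`: the number of unbordered words of length `n` over `Σ_k`. -/
noncomputable def UB (k n : ℕ) : ℕ :=
  ((Words k n).filter Unbordered).card

/-- `M k n`: the number of mutually bordered pairs of length-`n` words over `Σ_k`. -/
noncomputable def M (k n : ℕ) : ℕ :=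
  ((Words k n ×ˢ Words k n).filter (fun p => MutuallyBordered p.1 p.2)).card

/-- `R k n`: the number of right-bordered pairs of length-`n` words over `Σ_k`. -/
noncomputable def R (k n : ℕ) : ℕ :=
  ((Words k n ×ˢ Words k n).filter (fun p => RightBordered p.1 p.2)).card

/-- `U k n`: the number of mutually unbordered pairs of length-`n` words over `Σ_k`. -/
noncomputable def U (k n : ℕ) : ℕ :=
  ((Words k n ×ˢ Words k n).filter (fun p => MutuallyUnbordered p.1 p.2)).card

/-- `G u v m`: the number of unbordered words of length `m` over `Σ_k` having
`u` as a prefix and `v` as a suffix. -/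
noncomputable def G {k : ℕ} (u v : List (Fin k)) (m : ℕ) : ℕ :=
  ((Words k m).filter (fun w => Unbordered w ∧ u <+: w ∧ v <:+ w)).card

section Aux

variable {k : ℕ}

lemma mem_Words {m : ℕ} {w : List (Fin k)} : w ∈ Words k m ↔ w.length = m := by
  constructor
  · intro h
    simp only [Words, Finset.mem_image] at h
    obtain ⟨f, -, rfl⟩ := h
    simp
  · intro h
    subst h
    simp only [Words, Finset.mem_image]
    exact ⟨w.get, Finset.mem_univ _, List.ofFn_get w⟩

lemma card_Words (k m : ℕ) : (Words k m).card = k ^ m := by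
  rw [Words, Finset.card_image_of_injective _ List.ofFn_injective]
  simp

lemma suffix_of_suffix_length_le {a b c : List (Fin k)} (h1 : a <:+ c) (h2 : b <:+ c)
    (h : a.length ≤ b.length) : a <:+ b := by
  rw [← List.reverse_prefix] at h1 h2 ⊢
  exact List.prefix_of_prefix_length_le h1 h2 (by simpa using h)

lemma card_suffix (b : List (Fin k)) {n : ℕ} (h : b.length ≤ n) :
    ((Words k n).filter (fun u => b <:+ u)).card = k ^ (n - b.length) := by
  rw [← card_Words k (n - b.length)]
  symm
  apply Finset.card_bij (fun w _ => w ++ b)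
  · intro w hw
    rw [mem_Words] at hw
    rw [Finset.mem_filter, mem_Words]
    exact ⟨by simp [hw]; omega, ⟨w, rfl⟩⟩
  · intro w1 _ w2 _ hw
    exact List.append_cancel_right hw
  · intro u hu
    rw [Finset.mem_filter, mem_Words] at hu
    obtain ⟨hlen, hsuf⟩ := hu
    obtain ⟨w, rfl⟩ := hsuf
    have : w.length = n - b.length := by simp at hlen; omega
    exact ⟨w, mem_Words.mpr this, rfl⟩

lemma card_prefix (b : List (Fin k)) {n : ℕ} (h : b.length ≤ n) :
    ((Words k n).filter (fun v => b <+: v)).card = k ^ (n - b.length) := by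
  rw [← card_Words k (n - b.length)]
  symm
  apply Finset.card_bij (fun w _ => b ++ w)
  · intro w hw
    rw [mem_Words] at hw
    rw [Finset.mem_filter, mem_Words]
    exact ⟨by simp [hw]; omega, ⟨w, rfl⟩⟩
  · intro w1 _ w2 _ hw
    exact List.append_cancel_left hw
  · intro v hv
    rw [Finset.mem_filter, mem_Words] at hv
    obtain ⟨hlen, hpre⟩ := hv
    obtain ⟨w, rfl⟩ := hpre
    have : w.length = n - b.length := by simp at hlen; omega
    exact ⟨w, mem_Words.mpr this, rfl⟩

/-- pairs whose right-border includes `b` -/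
noncomputable def TT (k n : ℕ) (b : List (Fin k)) : Finset (List (Fin k) × List (Fin k)) :=
  (Words k n ×ˢ Words k n).filter (fun p => b <:+ p.1 ∧ b <+: p.2)

lemma card_TT {n : ℕ} (b : List (Fin k)) (h : b.length ≤ n) :
    (TT k n b).card = k ^ (n - b.length) * k ^ (n - b.length) := by
  rw [TT, Finset.filter_product, Finset.card_product, card_suffix b h, card_prefix b h]

lemma exists_shortest {u v : List (Fin k)} (h : ∃ b, IsRightBorder u v b) :
    ∃ b, IsRightBorder u v b ∧ ∀ b', IsRightBorder u v b' → b.length ≤ b'.length := by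
  obtain ⟨b0, hb0⟩ := h
  have hne : {m | ∃ b : List (Fin k), IsRightBorder u v b ∧ b.length = m}.Nonempty :=
    ⟨b0.length, b0, hb0, rfl⟩
  obtain ⟨b, hb, hblen⟩ := Nat.sInf_mem hne
  refine ⟨b, hb, fun b' hb' => ?_⟩
  rw [hblen]
  exact Nat.sInf_le ⟨b', hb', rfl⟩

lemma shortest_unbordered {u v b : List (Fin k)} (hb : IsRightBorder u v b)
    (hmin : ∀ b', IsRightBorder u v b' → b.length ≤ b'.length) : Unbordered b := by
  rintro c ⟨hc0, hcb, hcp, hcs⟩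
  have hclt : c.length < b.length := by
    have := hcp.length_le
    rcases lt_or_eq_of_le this with h | h
    · exact h
    · exact absurd (List.IsPrefix.eq_of_length hcp h) hcb
  have hcu : c <:+ u := hcs.trans hb.2.1
  have hcv : c <+: v := hcp.trans hb.2.2.2.1
  have hbu : b.length ≤ u.length := hb.2.1.length_le
  have hbv : b.length ≤ v.length := hb.2.2.2.1.length_le
  have : IsRightBorder u v c := by
    refine ⟨hc0, hcu, ?_, hcv, ?_⟩
    · intro h; subst h; omega
    · intro h; subst h; omega
  have := hmin c this
  omega

end Aux

section Main

variable {k : ℕ}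

lemma rb_of_mem_TT {n : ℕ} {b : List (Fin k)} (hb1 : 1 ≤ b.length) (hb2 : b.length ≤ n - 1)
    (hn : 1 ≤ n) {p : List (Fin k) × List (Fin k)} (hp : p ∈ TT k n b) :
    IsRightBorder p.1 p.2 b := by
  rw [TT, Finset.mem_filter, Finset.mem_product, mem_Words, mem_Words] at hp
  obtain ⟨⟨h1, h2⟩, hsuf, hpre⟩ := hp
  refine ⟨by rintro rfl; simp at hb1, hsuf, ?_, hpre, ?_⟩
  · intro h; subst h; omega
  · intro h; subst h; omega

lemma TT_disjoint {n : ℕ} (hn : 1 ≤ n) {b b' : List (Fin k)}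
    (hb : Unbordered b) (hb' : Unbordered b')
    (hb1 : 1 ≤ b.length) (hb1' : 1 ≤ b'.length) (hne : b ≠ b') :
    Disjoint (TT k n b) (TT k n b') := by
  rw [Finset.disjoint_left]
  intro p hp hp'
  rw [TT, Finset.mem_filter] at hp hp'
  obtain ⟨-, hsuf, hpre⟩ := hp
  obtain ⟨-, hsuf', hpre'⟩ := hp'
  -- wlog |b| ≤ |b'|
  have key : ∀ c c' : List (Fin k), Unbordered c' → 1 ≤ c.length → c ≠ c' →
      c <:+ p.1 → c' <:+ p.1 → c <+: p.2 → c' <+: p.2 → c.length ≤ c'.length → False := by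
    intro c c' hu hc1 hcc hs hs' hpp hpp' hlen
    have hsfx : c <:+ c' := suffix_of_suffix_length_le hs hs' hlen
    have hpfx : c <+: c' := List.prefix_of_prefix_length_le hpp hpp' hlen
    exact hu c ⟨by rintro rfl; simp at hc1, hcc, hpfx, hsfx⟩
  rcases le_total b.length b'.length with h | h
  · exact key b b' hb' hb1 hne hsuf hsuf' hpre hpre' h
  · exact key b' b hb hb1' (Ne.symm hne) hsuf' hsuf hpre' hpre h

lemma S_eq_biUnion (n : ℕ) (hn : 1 ≤ n) :
    ((Words k n ×ˢ Words k n).filter (fun p => ∃ b, IsRightBorder p.1 p.2 b)) =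
      ((Finset.Icc 1 (n - 1)).biUnion (fun i => (Words k i).filter Unbordered)).biUnion
        (TT k n) := by
  ext p
  rw [Finset.mem_filter, Finset.mem_biUnion]
  constructor
  · rintro ⟨hp, hex⟩
    obtain ⟨b, hb, hmin⟩ := exists_shortest hex
    have hub : Unbordered b := shortest_unbordered hb hmin
    have hpw := hp
    rw [Finset.mem_product, mem_Words, mem_Words] at hpw
    have hb1 : 1 ≤ b.length := List.length_pos_iff.mpr hb.1
    have hbu : b.length ≤ p.1.length := hb.2.1.length_le
    have hblt : b.length < n := by
      rcases lt_or_eq_of_le hbu with h | h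
      · omega
      · exact absurd ((List.suffix_iff_eq_drop.mp hb.2.1).trans (by simp [h])) hb.2.2.1
    refine ⟨b, ?_, ?_⟩
    · rw [Finset.mem_biUnion]
      exact ⟨b.length, Finset.mem_Icc.mpr ⟨hb1, by omega⟩,
        Finset.mem_filter.mpr ⟨mem_Words.mpr rfl, hub⟩⟩
    · rw [TT, Finset.mem_filter]
      exact ⟨hp, hb.2.1, hb.2.2.2.1⟩
  · rintro ⟨b, hbB, hp⟩
    rw [Finset.mem_biUnion] at hbB
    obtain ⟨i, hi, hbf⟩ := hbB
    rw [Finset.mem_Icc] at hi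
    rw [Finset.mem_filter, mem_Words] at hbf
    have hrb := rb_of_mem_TT (by omega : 1 ≤ b.length) (by omega : b.length ≤ n - 1) hn hp
    rw [TT, Finset.mem_filter] at hp
    exact ⟨hp.1, b, hrb⟩

lemma card_S (n : ℕ) (hn : 1 ≤ n) :
    ((Words k n ×ˢ Words k n).filter (fun p => ∃ b, IsRightBorder p.1 p.2 b)).card =
      ∑ i ∈ Finset.Icc 1 (n - 1), k ^ (2 * n - 2 * i) * UB k i := by
  rw [S_eq_biUnion n hn]
  rw [Finset.card_biUnion]
  · rw [Finset.sum_biUnion]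
    · apply Finset.sum_congr rfl
      intro i hi
      rw [Finset.mem_Icc] at hi
      have : ∀ b ∈ (Words k i).filter Unbordered, (TT k n b).card = k ^ (2 * n - 2 * i) := by
        intro b hb
        rw [Finset.mem_filter, mem_Words] at hb
        have hlen : b.length ≤ n := by omega
        rw [card_TT b hlen, hb.1, ← pow_add]
        congr 1
        omega
      rw [Finset.sum_congr rfl this, Finset.sum_const, UB, smul_eq_mul, mul_comm]
    · intro i hi j hj hij
      simp only [Function.onFun]
      rw [Finset.disjoint_left]
      intro b hbi hbj
      rw [Finset.mem_filter, mem_Words] at hbi hbj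
      exact hij (hbi.1 ▸ hbj.1)
  · intro b hb b' hb' hne
    rw [Finset.mem_coe, Finset.mem_biUnion] at hb hb'
    obtain ⟨i, hi, hbf⟩ := hb
    obtain ⟨j, hj, hbf'⟩ := hb'
    rw [Finset.mem_Icc] at hi hj
    rw [Finset.mem_filter, mem_Words] at hbf hbf'
    exact TT_disjoint hn hbf.2 hbf'.2 (by omega) (by omega) hne

lemma card_S_eq_R_add_M (n : ℕ) :
    ((Words k n ×ˢ Words k n).filter (fun p => ∃ b, IsRightBorder p.1 p.2 b)).card =
      R k n + M k n := by
  have heq : ∀ p : List (Fin k) × List (Fin k),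
      (∃ b, IsRightBorder p.1 p.2 b) ↔
        RightBordered p.1 p.2 ∨ MutuallyBordered p.1 p.2 := by
    intro p
    unfold RightBordered MutuallyBordered
    tauto
  rw [Finset.filter_congr (fun p _ => heq p), Finset.filter_or,
    Finset.card_union_of_disjoint, R, M]
  rw [Finset.disjoint_left]
  intro p hp hp'
  rw [Finset.mem_filter] at hp hp'
  exact hp.2.2 hp'.2.2

end Main

theorem stmt9 (k n : ℕ) (hk : 1 ≤ k) (hn : 1 ≤ n) :
    (R k n : ℤ) =
      (∑ i ∈ Finset.Icc 1 (n - 1), (k : ℤ) ^ (2 * n - 2 * i) * (UB k i : ℤ)) - M k n := by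
  have h1 := card_S (k := k) n hn
  have h2 := card_S_eq_R_add_M (k := k) n
  have h3 : R k n + M k n = ∑ i ∈ Finset.Icc 1 (n - 1), k ^ (2 * n - 2 * i) * UB k i := by
    rw [← h1, ← h2]
  have h4 := congrArg (fun x : ℕ => (x : ℤ)) h3
  push_cast at h4
  linarith
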